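/- Let k be an algebraically closed field of characteristic 2 and let n ≥ 2. Let 𝔤_> denote the subspace of sp(2n,k) consisting of those matrices whose four n×n blocks are all diagonal matrices (this is the long root subalgebra of type A₁ⁿ; it is a Lie subalgebra). Then: (1) sp(2n,k) = 𝔤_> + 𝔫, i.e. every element of sp(2n,k) is the sum of an element of 𝔤_> and an element of 𝔫; and (2) 𝔤_> ∩ 𝔪 = {x ∈ 𝔤_> : xy = yx for all y ∈ 𝔤_>}, the center of 𝔤_>. -/

import Mathlib

-- Preamble shared by the symplectic-Lie-algebra statements.
open Matrix

noncomputable section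

/-- The matrix of the standard symplectic form: `[[0, Iₙ], [−Iₙ, 0]]`. -/
def spJ (k : Type*) [Field k] (n : ℕ) :
    Matrix (Fin n ⊕ Fin n) (Fin n ⊕ Fin n) k :=
  Matrix.fromBlocks 0 1 (-1) 0

/-- The symplectic Lie algebra `sp(2n,k) = {x : xᵀJ + Jx = 0}`, as a subset of the
matrix Lie algebra (with bracket `⁅x,y⁆ = x*y - y*x`). -/
def spSet (k : Type*) [Field k] (n : ℕ) :
    Set (Matrix (Fin n ⊕ Fin n) (Fin n ⊕ Fin n) k) :=
  {x | xᵀ * spJ k n + spJ k n * x = 0}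

/-- The symplectic group `Sp(2n,k) = {g : gᵀJg = J}`. -/
def SpGroup (k : Type*) [Field k] (n : ℕ) :
    Set (Matrix (Fin n ⊕ Fin n) (Fin n ⊕ Fin n) k) :=
  {g | gᵀ * spJ k n * g = spJ k n}

/-- The derived subalgebra `𝔪 = ⁅sp(2n,k), sp(2n,k)⁆`, i.e. the span of all brackets of
pairs of elements of `sp(2n,k)`. -/
def spm (k : Type*) [Field k] (n : ℕ) :
    Submodule k (Matrix (Fin n ⊕ Fin n) (Fin n ⊕ Fin n) k) :=
  Submodule.span k {m | ∃ x ∈ spSet k n, ∃ y ∈ spSet k n, m = x * y - y * x}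

/-- The second derived subalgebra `𝔫 = ⁅𝔪, 𝔪⁆`. -/
def spn (k : Type*) [Field k] (n : ℕ) :
    Submodule k (Matrix (Fin n ⊕ Fin n) (Fin n ⊕ Fin n) k) :=
  Submodule.span k {m | ∃ x ∈ spm k n, ∃ y ∈ spm k n, m = x * y - y * x}

/-- The center `{x ∈ sp(2n,k) : ⁅x,y⁆ = 0 for all y ∈ sp(2n,k)}`. -/
def spCenter (k : Type*) [Field k] (n : ℕ) :
    Set (Matrix (Fin n ⊕ Fin n) (Fin n ⊕ Fin n) k) :=
  {x ∈ spSet k n | ∀ y ∈ spSet k n, x * y - y * x = 0}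

open Sum

section Aux

variable {k : Type*} [Field k] {n : ℕ}

lemma spEntry (x : Matrix (Fin n ⊕ Fin n) (Fin n ⊕ Fin n) k) (s t : Fin n ⊕ Fin n) :
    (xᵀ * spJ k n + spJ k n * x) s t =
      (match t with
       | inl j => - x (inr j) s
       | inr j => x (inl j) s) +
      (match s with
       | inl i => x (inr i) t
       | inr i => - x (inl i) t) := by
  have h1 : ∀ s t, (xᵀ * spJ k n) s t = (match t with
       | inl j => - x (inr j) s
       | inr j => x (inl j) s) := by
    intro s t
    rw [mul_apply, Fintype.sum_sum_type]
    cases t with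
    | inl j => simp [spJ, one_apply, Finset.sum_ite_eq, transpose_apply]
    | inr j => simp [spJ, one_apply, Finset.sum_ite_eq, transpose_apply]
  have h2 : ∀ s t, (spJ k n * x) s t = (match s with
       | inl i => x (inr i) t
       | inr i => - x (inl i) t) := by
    intro s t
    rw [mul_apply, Fintype.sum_sum_type]
    cases s with
    | inl i => simp [spJ, one_apply, Finset.sum_ite_eq, transpose_apply]
    | inr i => simp [spJ, one_apply, Finset.sum_ite_eq, transpose_apply]
  rw [Matrix.add_apply, h1, h2]


lemma spE11 (x : Matrix (Fin n ⊕ Fin n) (Fin n ⊕ Fin n) k) (i j : Fin n) :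
    (xᵀ * spJ k n + spJ k n * x) (inl i) (inl j) = - x (inr j) (inl i) + x (inr i) (inl j) :=
  spEntry x (inl i) (inl j)
lemma spE12 (x : Matrix (Fin n ⊕ Fin n) (Fin n ⊕ Fin n) k) (i j : Fin n) :
    (xᵀ * spJ k n + spJ k n * x) (inl i) (inr j) = x (inl j) (inl i) + x (inr i) (inr j) :=
  spEntry x (inl i) (inr j)
lemma spE21 (x : Matrix (Fin n ⊕ Fin n) (Fin n ⊕ Fin n) k) (i j : Fin n) :
    (xᵀ * spJ k n + spJ k n * x) (inr i) (inl j) = - x (inr j) (inr i) + - x (inl i) (inl j) :=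
  spEntry x (inr i) (inl j)
lemma spE22 (x : Matrix (Fin n ⊕ Fin n) (Fin n ⊕ Fin n) k) (i j : Fin n) :
    (xᵀ * spJ k n + spJ k n * x) (inr i) (inr j) = x (inl j) (inr i) + - x (inl i) (inr j) :=
  spEntry x (inr i) (inr j)

lemma mem_spSet_iff (x : Matrix (Fin n ⊕ Fin n) (Fin n ⊕ Fin n) k) :
    x ∈ spSet k n ↔ ∀ i j : Fin n,
      x (inr i) (inl j) = x (inr j) (inl i) ∧
      x (inl i) (inr j) = x (inl j) (inr i) ∧
      x (inr i) (inr j) = - x (inl j) (inl i) := by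
  constructor
  · intro h i j
    have h' : ∀ s t, (xᵀ * spJ k n + spJ k n * x) s t = 0 := by
      intro s t; rw [h]; rfl
    refine ⟨?_, ?_, ?_⟩
    · have := h' (inl i) (inl j); rw [spE11] at this; linear_combination this
    · have := h' (inr i) (inr j); rw [spE22] at this; linear_combination -this
    · have := h' (inr j) (inl i); rw [spE21] at this; linear_combination -this
  · intro h
    ext s t
    show (xᵀ * spJ k n + spJ k n * x) s t = 0
    cases s with
    | inl i => cases t with
      | inl j => rw [spE11]; linear_combination (h i j).1
      | inr j => rw [spE12]; linear_combination (h i j).2.2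
    | inr i => cases t with
      | inl j => rw [spE21]; linear_combination -(h j i).2.2
      | inr j => rw [spE22]; linear_combination -(h i j).2.1
  
variable [CharP k 2]

lemma subM (A B : Matrix (Fin n ⊕ Fin n) (Fin n ⊕ Fin n) k) : A - B = A + B := by
  ext s t
  rw [Matrix.sub_apply, Matrix.add_apply, sub_eq_add_neg, CharTwo.neg_eq]

def genX (i j : Fin n) : Matrix (Fin n ⊕ Fin n) (Fin n ⊕ Fin n) k :=
  Matrix.single (inl i) (inl j) 1 + Matrix.single (inr j) (inr i) 1
def genB (i j : Fin n) : Matrix (Fin n ⊕ Fin n) (Fin n ⊕ Fin n) k :=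
  Matrix.single (inl i) (inr j) 1 + Matrix.single (inl j) (inr i) 1
def genC (i j : Fin n) : Matrix (Fin n ⊕ Fin n) (Fin n ⊕ Fin n) k :=
  Matrix.single (inr i) (inl j) 1 + Matrix.single (inr j) (inl i) 1

lemma genX_spSet (i j : Fin n) : (genX i j : Matrix _ _ k) ∈ spSet k n := by
  rw [mem_spSet_iff]
  intro a b
  refine ⟨by simp [genX], by simp [genX], ?_⟩
  simp only [genX, Matrix.add_apply, Matrix.single, of_apply]
  rw [CharTwo.neg_eq]
  split_ifs with h1 h2 h3 h4 h5 h6 <;> simp_all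

lemma genB_spSet (i j : Fin n) : (genB i j : Matrix _ _ k) ∈ spSet k n := by
  rw [mem_spSet_iff]
  intro a b
  refine ⟨by simp [genB], ?_, by simp [genB, CharTwo.neg_eq]⟩
  by_cases h1 : i = a <;> by_cases h2 : j = b <;> by_cases h3 : j = a <;> by_cases h4 : i = b <;>
    simp_all [genB, Matrix.single]

lemma genC_spSet (i j : Fin n) : (genC i j : Matrix _ _ k) ∈ spSet k n := by
  rw [mem_spSet_iff]
  intro a b
  refine ⟨?_, by simp [genC], by simp [genC, CharTwo.neg_eq]⟩
  by_cases h1 : i = a <;> by_cases h2 : j = b <;> by_cases h3 : j = a <;> by_cases h4 : i = b <;>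
    simp_all [genC, Matrix.single]

lemma stdBasisMatrix_mem_spSet₁ (i : Fin n) :
    (Matrix.single (inl i : Fin n ⊕ Fin n) (inr i : Fin n ⊕ Fin n) (1:k)) ∈ spSet k n := by
  rw [mem_spSet_iff]
  intro a b
  refine ⟨by simp, ?_, by simp⟩
  by_cases h1 : i = a <;> by_cases h2 : i = b <;> simp_all [Matrix.single]

lemma stdBasisMatrix_mem_spSet₂ (i : Fin n) :
    (Matrix.single (inr i : Fin n ⊕ Fin n) (inl i : Fin n ⊕ Fin n) (1:k)) ∈ spSet k n := by
  rw [mem_spSet_iff]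
  intro a b
  refine ⟨?_, by simp, by simp⟩
  by_cases h1 : i = a <;> by_cases h2 : i = b <;> simp_all [Matrix.single]

lemma genX_bracket_diag (i : Fin n) :
    (genX i i : Matrix _ _ k) =
      Matrix.single (inl i) (inr i) 1 * Matrix.single (inr i) (inl i) 1 -
      Matrix.single (inr i) (inl i) 1 * Matrix.single (inl i) (inr i) 1 := by
  rw [subM, Matrix.single_mul_single_same, Matrix.single_mul_single_same, genX, one_mul]

lemma genX_bracket (i j : Fin n) (hij : i ≠ j) :
    (genX i j : Matrix _ _ k) = genX i i * genX i j - genX i j * genX i i := by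
  rw [subM]
  simp [genX, add_mul, mul_add, hij, hij.symm]

lemma genB_bracket (i j : Fin n) (hij : i ≠ j) :
    (genB i j : Matrix _ _ k) = genX i i * genB i j - genB i j * genX i i := by
  rw [subM]
  simp [genX, genB, add_mul, mul_add, hij, hij.symm]

lemma genC_bracket (i j : Fin n) (hij : i ≠ j) :
    (genC i j : Matrix _ _ k) = genX i i * genC i j - genC i j * genX i i := by
  rw [subM]
  simp [genX, genC, add_mul, mul_add, hij, hij.symm]

lemma genX_mem_spm (i j : Fin n) : (genX i j : Matrix _ _ k) ∈ spm k n := by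
  rcases eq_or_ne i j with rfl | hij
  · exact Submodule.subset_span ⟨_, stdBasisMatrix_mem_spSet₁ i, _, stdBasisMatrix_mem_spSet₂ i,
      genX_bracket_diag i⟩
  · exact Submodule.subset_span ⟨_, genX_spSet i i, _, genX_spSet i j, (genX_bracket i j hij)⟩


lemma genX_mem_spn (i j : Fin n) (hij : i ≠ j) : (genX i j : Matrix _ _ k) ∈ spn k n :=
  Submodule.subset_span ⟨_, genX_mem_spm i i, _, genX_mem_spm i j, genX_bracket i j hij⟩

lemma genB_mem_spm (i j : Fin n) (hij : i ≠ j) : (genB i j : Matrix _ _ k) ∈ spm k n :=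
  Submodule.subset_span ⟨_, genX_spSet i i, _, genB_spSet i j, genB_bracket i j hij⟩

lemma genB_mem_spn (i j : Fin n) (hij : i ≠ j) : (genB i j : Matrix _ _ k) ∈ spn k n :=
  Submodule.subset_span ⟨_, genX_mem_spm i i, _, genB_mem_spm i j hij, genB_bracket i j hij⟩

lemma genC_mem_spm (i j : Fin n) (hij : i ≠ j) : (genC i j : Matrix _ _ k) ∈ spm k n :=
  Submodule.subset_span ⟨_, genX_spSet i i, _, genC_spSet i j, genC_bracket i j hij⟩

lemma genC_mem_spn (i j : Fin n) (hij : i ≠ j) : (genC i j : Matrix _ _ k) ∈ spn k n :=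
  Submodule.subset_span ⟨_, genX_mem_spm i i, _, genC_mem_spm i j hij, genC_bracket i j hij⟩

lemma decompose (b : Matrix (Fin n ⊕ Fin n) (Fin n ⊕ Fin n) k) (hb : b ∈ spSet k n)
    (hd : ∀ i : Fin n, b (inl i) (inl i) = 0 ∧ b (inl i) (inr i) = 0 ∧
      b (inr i) (inl i) = 0 ∧ b (inr i) (inr i) = 0) :
    b = (∑ i, ∑ j, (if i = j then 0 else b (inl i) (inl j)) • genX i j)
      + (∑ i, ∑ j, (if i < j then b (inl i) (inr j) else 0) • genB i j)
      + (∑ i, ∑ j, (if i < j then b (inr i) (inl j) else 0) • genC i j) := by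
  have hsp := (mem_spSet_iff b).1 hb
  ext s t
  simp only [Matrix.add_apply, Matrix.sum_apply, Matrix.smul_apply, genX, genB, genC,
    Matrix.add_apply, smul_eq_mul, Matrix.single, of_apply]
  cases s with
  | inl a =>
    cases t with
    | inl c =>
      simp only [Sum.inl.injEq, Sum.inr.injEq, reduceCtorEq, and_false, false_and, if_false,
        mul_zero, add_zero, zero_add, mul_add, mul_ite, mul_one, ite_and, Finset.sum_add_distrib,
        Finset.sum_ite_eq, Finset.sum_ite_eq', Finset.mem_univ, if_true, Finset.sum_const_zero]
      rcases eq_or_ne a c with rfl | h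
      · simp [(hd a).1]
      · simp [h]
    | inr c =>
      simp only [Sum.inl.injEq, Sum.inr.injEq, reduceCtorEq, and_false, false_and, if_false,
        mul_zero, add_zero, zero_add, mul_add, mul_ite, mul_one, ite_and, Finset.sum_add_distrib,
        Finset.sum_ite_eq, Finset.sum_ite_eq', Finset.mem_univ, if_true, Finset.sum_const_zero]
      rcases lt_trichotomy a c with h | rfl | h
      · simp [h, asymm h]
      · simp [(hd a).2.1, lt_irrefl]
      · simp [h, asymm h, (hsp a c).2.1]
  | inr a =>
    cases t with
    | inl c =>
      simp only [Sum.inl.injEq, Sum.inr.injEq, reduceCtorEq, and_false, false_and, if_false,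
        mul_zero, add_zero, zero_add, mul_add, mul_ite, mul_one, ite_and, Finset.sum_add_distrib,
        Finset.sum_ite_eq, Finset.sum_ite_eq', Finset.mem_univ, if_true, Finset.sum_const_zero]
      rcases lt_trichotomy a c with h | rfl | h
      · simp [h, asymm h]
      · simp [(hd a).2.2.1, lt_irrefl]
      · simp [h, asymm h, (hsp a c).1]
    | inr c =>
      simp only [Sum.inl.injEq, Sum.inr.injEq, reduceCtorEq, and_false, false_and, if_false,
        mul_zero, add_zero, zero_add, mul_add, mul_ite, mul_one, ite_and, Finset.sum_add_distrib,
        Finset.sum_ite_eq, Finset.sum_ite_eq', Finset.mem_univ, if_true, Finset.sum_const_zero]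
      rcases eq_or_ne c a with rfl | h
      · simp [(hd c).2.2.2]
      · rw [(hsp a c).2.2, CharTwo.neg_eq]
        simp [h]

lemma spm_diag (z : Matrix (Fin n ⊕ Fin n) (Fin n ⊕ Fin n) k) (hz : z ∈ spm k n) (i : Fin n) :
    z (inl i) (inr i) = 0 ∧ z (inr i) (inl i) = 0 := by
  induction hz using Submodule.span_induction with
  | mem m hm =>
    obtain ⟨x, hx, y, hy, rfl⟩ := hm
    have hx' := (mem_spSet_iff x).1 hx
    have hy' := (mem_spSet_iff y).1 hy
    have h2 : (2:k) = 0 := CharTwo.two_eq_zero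
    constructor
    · rw [Matrix.sub_apply, mul_apply, mul_apply, Fintype.sum_sum_type, Fintype.sum_sum_type,
        ← Finset.sum_add_distrib, ← Finset.sum_add_distrib, ← Finset.sum_sub_distrib]
      apply Finset.sum_eq_zero
      intro j _
      rw [(hy' j i).2.1, (hy' j i).2.2, (hx' j i).2.1, (hx' j i).2.2]
      linear_combination (x (inl i) (inl j) * y (inl i) (inr j)
        - x (inl i) (inr j) * y (inl i) (inl j)) * h2
    · rw [Matrix.sub_apply, mul_apply, mul_apply, Fintype.sum_sum_type, Fintype.sum_sum_type,
        ← Finset.sum_add_distrib, ← Finset.sum_add_distrib, ← Finset.sum_sub_distrib]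
      apply Finset.sum_eq_zero
      intro j _
      rw [(hx' i j).1, (hx' i j).2.2, (hy' i j).1, (hy' i j).2.2]
      linear_combination (x (inr j) (inl i) * y (inl j) (inl i)
        - x (inl j) (inl i) * y (inr j) (inl i)) * h2
  | zero => simp
  | add u v hu hv ihu ihv =>
    exact ⟨by simp [Matrix.add_apply, ihu.1, ihv.1], by simp [Matrix.add_apply, ihu.2, ihv.2]⟩
  | smul a u hu ih =>
    exact ⟨by simp [Matrix.smul_apply, ih.1], by simp [Matrix.smul_apply, ih.2]⟩

lemma diag_decompose (x : Matrix (Fin n ⊕ Fin n) (Fin n ⊕ Fin n) k) (hx : x ∈ spSet k n)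
    (hoff : ∀ i j : Fin n, i ≠ j → x (inl i) (inl j) = 0 ∧ x (inl i) (inr j) = 0 ∧
      x (inr i) (inl j) = 0 ∧ x (inr i) (inr j) = 0)
    (hd : ∀ i : Fin n, x (inl i) (inr i) = 0 ∧ x (inr i) (inl i) = 0) :
    x = ∑ i, x (inl i) (inl i) • genX i i := by
  have hsp := (mem_spSet_iff x).1 hx
  ext s t
  simp only [Matrix.sum_apply, Matrix.smul_apply, genX, Matrix.add_apply, smul_eq_mul,
    Matrix.single, of_apply]
  cases s with
  | inl a =>
    cases t with
    | inl c =>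
      simp only [Sum.inl.injEq, Sum.inr.injEq, reduceCtorEq, and_false, false_and, if_false,
        mul_add, mul_zero, add_zero, mul_ite, mul_one, ite_and, Finset.sum_ite_eq,
        Finset.sum_ite_eq', Finset.mem_univ, if_true, Finset.sum_const_zero]
      rcases eq_or_ne a c with rfl | h
      · simp
      · simp [h, Ne.symm h, (hoff a c h).1]
    | inr c =>
      simp only [Sum.inl.injEq, Sum.inr.injEq, reduceCtorEq, and_false, false_and, if_false,
        mul_zero, add_zero, Finset.sum_const_zero]
      rcases eq_or_ne a c with rfl | h
      · exact (hd a).1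
      · exact (hoff a c h).2.1
  | inr a =>
    cases t with
    | inl c =>
      simp only [Sum.inl.injEq, Sum.inr.injEq, reduceCtorEq, and_false, false_and, if_false,
        mul_zero, add_zero, zero_add, Finset.sum_const_zero]
      rcases eq_or_ne a c with rfl | h
      · exact (hd a).2
      · exact (hoff a c h).2.2.1
    | inr c =>
      simp only [Sum.inl.injEq, Sum.inr.injEq, reduceCtorEq, and_false, false_and, if_false,
        mul_add, mul_zero, add_zero, zero_add, mul_ite, mul_one, ite_and, Finset.sum_ite_eq,
        Finset.sum_ite_eq', Finset.mem_univ, if_true, Finset.sum_const_zero]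
      rcases eq_or_ne a c with rfl | h
      · rw [(hsp a a).2.2, CharTwo.neg_eq]
        simp
      · simp [h, Ne.symm h, (hoff a c h).2.2.2]

lemma std_mem_Ggt₁ (i : Fin n) (a b : Fin n) (hab : a ≠ b) :
    (Matrix.single (inl i : Fin n ⊕ Fin n) (inr i : Fin n ⊕ Fin n) (1:k)) (inl a) (inl b) = 0 ∧
    (Matrix.single (inl i : Fin n ⊕ Fin n) (inr i : Fin n ⊕ Fin n) (1:k)) (inl a) (inr b) = 0 ∧
    (Matrix.single (inl i : Fin n ⊕ Fin n) (inr i : Fin n ⊕ Fin n) (1:k)) (inr a) (inl b) = 0 ∧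
    (Matrix.single (inl i : Fin n ⊕ Fin n) (inr i : Fin n ⊕ Fin n) (1:k)) (inr a) (inr b) = 0 := by
  refine ⟨by simp, ?_, by simp, by simp⟩
  simp only [Matrix.single, of_apply, Sum.inl.injEq, Sum.inr.injEq, ite_eq_right_iff, and_imp]
  rintro rfl rfl
  exact absurd rfl hab

lemma std_mem_Ggt₂ (i : Fin n) (a b : Fin n) (hab : a ≠ b) :
    (Matrix.single (inr i : Fin n ⊕ Fin n) (inl i : Fin n ⊕ Fin n) (1:k)) (inl a) (inl b) = 0 ∧
    (Matrix.single (inr i : Fin n ⊕ Fin n) (inl i : Fin n ⊕ Fin n) (1:k)) (inl a) (inr b) = 0 ∧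
    (Matrix.single (inr i : Fin n ⊕ Fin n) (inl i : Fin n ⊕ Fin n) (1:k)) (inr a) (inl b) = 0 ∧
    (Matrix.single (inr i : Fin n ⊕ Fin n) (inl i : Fin n ⊕ Fin n) (1:k)) (inr a) (inr b) = 0 := by
  refine ⟨by simp, by simp, ?_, by simp⟩
  simp only [Matrix.single, of_apply, Sum.inl.injEq, Sum.inr.injEq, ite_eq_right_iff, and_imp]
  rintro rfl rfl
  exact absurd rfl hab

theorem stmt7' (hn : 2 ≤ n)
    (Ggt : Set (Matrix (Fin n ⊕ Fin n) (Fin n ⊕ Fin n) k))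
    (hGgt : Ggt = {x ∈ spSet k n | ∀ i j : Fin n, i ≠ j →
      x (Sum.inl i) (Sum.inl j) = 0 ∧ x (Sum.inl i) (Sum.inr j) = 0 ∧
      x (Sum.inr i) (Sum.inl j) = 0 ∧ x (Sum.inr i) (Sum.inr j) = 0}) :
    (∀ x ∈ spSet k n, ∃ a ∈ Ggt, ∃ b ∈ spn k n, x = a + b) ∧
    {x ∈ Ggt | x ∈ spm k n} = {x ∈ Ggt | ∀ y ∈ Ggt, x * y = y * x} := by
  subst hGgt
  constructor
  · -- Part (1)
    intro x hx
    have hx' := (mem_spSet_iff x).1 hx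
    set a : Matrix (Fin n ⊕ Fin n) (Fin n ⊕ Fin n) k :=
      Matrix.of (fun s t => if Sum.elim id id s = Sum.elim id id t then x s t else 0) with ha_def
    have ha_app : ∀ s t, a s t = if Sum.elim id id s = Sum.elim id id t then x s t else 0 :=
      fun s t => rfl
    have ha_sp : a ∈ spSet k n := by
      rw [mem_spSet_iff]
      intro i j
      refine ⟨?_, ?_, ?_⟩ <;> rw [ha_app, ha_app] <;>
        rcases eq_or_ne i j with rfl | h
      · rfl
      · simp [h, Ne.symm h]
      · rfl
      · simp [h, Ne.symm h]
      · simpa using (hx' i i).2.2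
      · simp [h, Ne.symm h]
    have ha_off : ∀ i j : Fin n, i ≠ j →
        a (inl i) (inl j) = 0 ∧ a (inl i) (inr j) = 0 ∧
        a (inr i) (inl j) = 0 ∧ a (inr i) (inr j) = 0 := by
      intro i j hij
      refine ⟨?_, ?_, ?_, ?_⟩ <;> rw [ha_app] <;> simp [hij]
    set b : Matrix (Fin n ⊕ Fin n) (Fin n ⊕ Fin n) k := x - a with hb_def
    have ha' := (mem_spSet_iff a).1 ha_sp
    have hb_sp : b ∈ spSet k n := by
      rw [mem_spSet_iff]
      intro i j
      refine ⟨?_, ?_, ?_⟩ <;> simp only [hb_def, Matrix.sub_apply]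
      · linear_combination (hx' i j).1 - (ha' i j).1
      · linear_combination (hx' i j).2.1 - (ha' i j).2.1
      · linear_combination (hx' i j).2.2 - (ha' i j).2.2
    have hb_diag : ∀ i : Fin n, b (inl i) (inl i) = 0 ∧ b (inl i) (inr i) = 0 ∧
        b (inr i) (inl i) = 0 ∧ b (inr i) (inr i) = 0 := by
      intro i
      refine ⟨?_, ?_, ?_, ?_⟩ <;> simp [hb_def, ha_app]
    refine ⟨a, ⟨ha_sp, ha_off⟩, b, ?_, by rw [hb_def, add_sub_cancel]⟩
    rw [decompose b hb_sp hb_diag]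
    refine Submodule.add_mem _ (Submodule.add_mem _ ?_ ?_) ?_ <;>
      refine Submodule.sum_mem _ fun i _ => Submodule.sum_mem _ fun j _ => ?_
    · rcases eq_or_ne i j with rfl | h
      · rw [if_pos rfl, zero_smul]; exact Submodule.zero_mem _
      · rw [if_neg h]; exact Submodule.smul_mem _ _ (genX_mem_spn i j h)
    · by_cases h : i < j
      · rw [if_pos h]; exact Submodule.smul_mem _ _ (genB_mem_spn i j h.ne)
      · rw [if_neg h, zero_smul]; exact Submodule.zero_mem _
    · by_cases h : i < j
      · rw [if_pos h]; exact Submodule.smul_mem _ _ (genC_mem_spn i j h.ne)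
      · rw [if_neg h, zero_smul]; exact Submodule.zero_mem _
  · -- Part (2)
    ext z
    simp only [Set.mem_setOf_eq]
    constructor
    · rintro ⟨⟨hz_sp, hz_off⟩, hzm⟩
      refine ⟨⟨hz_sp, hz_off⟩, ?_⟩
      rintro y ⟨hy_sp, hy_off⟩
      have hzd := fun i => spm_diag z hzm i
      have hz' := (mem_spSet_iff z).1 hz_sp
      have hzdg : z = Matrix.diagonal (fun s => z s s) := by
        ext s t
        rcases eq_or_ne s t with rfl | h
        · rw [Matrix.diagonal_apply_eq]
        · rw [Matrix.diagonal_apply_ne _ h]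
          cases s with
          | inl i => cases t with
            | inl j => exact (hz_off i j (fun hh => h (by rw [hh]))).1
            | inr j =>
              rcases eq_or_ne i j with rfl | hij
              · exact (hzd i).1
              · exact (hz_off i j hij).2.1
          | inr i => cases t with
            | inl j =>
              rcases eq_or_ne i j with rfl | hij
              · exact (hzd i).2
              · exact (hz_off i j hij).2.2.1
            | inr j => exact (hz_off i j (fun hh => h (by rw [hh]))).2.2.2
      have hval : ∀ i : Fin n, z (inr i) (inr i) = z (inl i) (inl i) := by
        intro i
        rw [(hz' i i).2.2, CharTwo.neg_eq]
      ext s t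
      rw [hzdg, Matrix.diagonal_mul, Matrix.mul_diagonal]
      cases s with
      | inl i => cases t with
        | inl j =>
          rcases eq_or_ne i j with rfl | hij
          · exact mul_comm _ _
          · rw [(hy_off i j hij).1]; ring
        | inr j =>
          rcases eq_or_ne i j with rfl | hij
          · rw [hval i]; exact mul_comm _ _
          · rw [(hy_off i j hij).2.1]; ring
      | inr i => cases t with
        | inl j =>
          rcases eq_or_ne i j with rfl | hij
          · rw [hval i]; exact mul_comm _ _
          · rw [(hy_off i j hij).2.2.1]; ring
        | inr j =>
          rcases eq_or_ne i j with rfl | hij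
          · exact mul_comm _ _
          · rw [(hy_off i j hij).2.2.2]; ring
    · rintro ⟨⟨hz_sp, hz_off⟩, hcomm⟩
      refine ⟨⟨hz_sp, hz_off⟩, ?_⟩
      have hbz : ∀ i : Fin n, z (inl i) (inr i) = 0 := by
        intro i
        have hy : (Matrix.single (inr i : Fin n ⊕ Fin n) (inl i : Fin n ⊕ Fin n) (1:k)) ∈
            {x ∈ spSet k n | ∀ i j : Fin n, i ≠ j →
              x (Sum.inl i) (Sum.inl j) = 0 ∧ x (Sum.inl i) (Sum.inr j) = 0 ∧
              x (Sum.inr i) (Sum.inl j) = 0 ∧ x (Sum.inr i) (Sum.inr j) = 0} :=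
          ⟨stdBasisMatrix_mem_spSet₂ i, fun a b hab => std_mem_Ggt₂ i a b hab⟩
        have h := congrFun (congrFun (hcomm _ hy) (inl i)) (inl i)
        rw [Matrix.mul_single_apply_same,
          Matrix.single_mul_apply_of_ne _ _ _ _ _ Sum.inl_ne_inr, mul_one] at h
        exact h
      have hcz : ∀ i : Fin n, z (inr i) (inl i) = 0 := by
        intro i
        have hy : (Matrix.single (inl i : Fin n ⊕ Fin n) (inr i : Fin n ⊕ Fin n) (1:k)) ∈
            {x ∈ spSet k n | ∀ i j : Fin n, i ≠ j →
              x (Sum.inl i) (Sum.inl j) = 0 ∧ x (Sum.inl i) (Sum.inr j) = 0 ∧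
              x (Sum.inr i) (Sum.inl j) = 0 ∧ x (Sum.inr i) (Sum.inr j) = 0} :=
          ⟨stdBasisMatrix_mem_spSet₁ i, fun a b hab => std_mem_Ggt₁ i a b hab⟩
        have h := congrFun (congrFun (hcomm _ hy) (inr i)) (inr i)
        rw [Matrix.mul_single_apply_same,
          Matrix.single_mul_apply_of_ne _ _ _ _ _ Sum.inr_ne_inl, mul_one] at h
        exact h
      rw [diag_decompose z hz_sp hz_off (fun i => ⟨hbz i, hcz i⟩)]
      exact Submodule.sum_mem _ fun i _ => Submodule.smul_mem _ _ (genX_mem_spm i i)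

end Aux

/-- Let `k` be algebraically closed of characteristic 2 and `n ≥ 2`, and let `𝔤_>` be the
subspace of `sp(2n,k)` of matrices whose four `n×n` blocks are all diagonal (the long
root subalgebra of type `A₁ⁿ`). Then (1) `sp(2n,k) = 𝔤_> + 𝔫`, and
(2) `𝔤_> ∩ 𝔪` is the center `{x ∈ 𝔤_> : xy = yx for all y ∈ 𝔤_>}` of `𝔤_>`. -/
theorem stmt7 (k : Type*) [Field k] [IsAlgClosed k] [CharP k 2] (n : ℕ) (hn : 2 ≤ n)
    (Ggt : Set (Matrix (Fin n ⊕ Fin n) (Fin n ⊕ Fin n) k))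
    (hGgt : Ggt = {x ∈ spSet k n | ∀ i j : Fin n, i ≠ j →
      x (Sum.inl i) (Sum.inl j) = 0 ∧ x (Sum.inl i) (Sum.inr j) = 0 ∧
      x (Sum.inr i) (Sum.inl j) = 0 ∧ x (Sum.inr i) (Sum.inr j) = 0}) :
    (∀ x ∈ spSet k n, ∃ a ∈ Ggt, ∃ b ∈ spn k n, x = a + b) ∧
    {x ∈ Ggt | x ∈ spm k n} = {x ∈ Ggt | ∀ y ∈ Ggt, x * y = y * x} :=
  stmt7' hn Ggt hGgt
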